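/- For all real numbers α₁, α₂ with 0 < α₁ < α₂ < 1/2, we have h_b(α₂) − h_b(α₁) + h_b(α₁/α₂) − h_b((α₂−α₁)/(1−α₁)) > 0. -/

import Mathlib

/-- Binary entropy (natural log). -/
noncomputable def binEnt (p : ℝ) : ℝ := -(p * Real.log p) - (1 - p) * Real.log (1 - p)

/-- For `0 < α₁ < α₂ < 1/2`,
`h_b(α₂) − h_b(α₁) + h_b(α₁/α₂) − h_b((α₂−α₁)/(1−α₁)) > 0`. -/
theorem entropy_difference_pos (α₁ α₂ : ℝ)
    (h1 : 0 < α₁) (h12 : α₁ < α₂) (h2 : α₂ < 1 / 2) :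
    0 < binEnt α₂ - binEnt α₁ + binEnt (α₁ / α₂) - binEnt ((α₂ - α₁) / (1 - α₁)) := by
  set a := α₁
  set b := α₂
  have hb0 : 0 < b := h1.trans h12
  have hba : 0 < b - a := by linarith
  have h1a : 0 < 1 - a := by linarith
  have h1b : 0 < 1 - b := by linarith
  have hb1a : b < 1 - a := by linarith
  have ha0 : a ≠ 0 := ne_of_gt h1
  have hb0' : b ≠ 0 := ne_of_gt hb0
  have hba' : b - a ≠ 0 := ne_of_gt hba
  have h1a' : (1:ℝ) - a ≠ 0 := ne_of_gt h1a
  have h1b' : (1:ℝ) - b ≠ 0 := ne_of_gt h1b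
  -- abbreviations for logs
  set La := Real.log a with hLa
  set Lb := Real.log b with hLb
  set Lba := Real.log (b - a) with hLba
  set L1a := Real.log (1 - a) with hL1a
  set L1b := Real.log (1 - b) with hL1b
  -- Step 1: algebraic decomposition
  have key : binEnt b - binEnt a + binEnt (a / b) - binEnt ((b - a) / (1 - a)) =
      a * (1 - b) * ((Lb - La) / b - (L1a - L1b) / (1 - a)) +
      (b - a) * ((1 - b) * (Lb - Lba) / b - a * (L1a - Lba) / (1 - a)) := by
    have e1 : (1:ℝ) - a / b = (b - a) / b := by field_simp
    have e2 : (1:ℝ) - (b - a) / (1 - a) = (1 - b) / (1 - a) := by field_simp; ring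
    simp only [binEnt, e1, e2, Real.log_div ha0 hb0', Real.log_div hba' hb0',
      Real.log_div hba' h1a', Real.log_div h1b' h1a', ← hLa, ← hLb, ← hLba, ← hL1a, ← hL1b]
    field_simp
    ring
  rw [key]
  -- Term A is positive
  have hA : 0 < a * (1 - b) * ((Lb - La) / b - (L1a - L1b) / (1 - a)) := by
    have l2 : 0 < L1a - L1b := by
      have := Real.log_lt_log h1b (by linarith : (1:ℝ) - b < 1 - a)
      linarith
    have l1 : L1a - L1b < Lb - La := by
      have h1 : Real.log (a * (1 - a)) < Real.log (b * (1 - b)) := by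
        apply Real.log_lt_log (by positivity)
        nlinarith
      rw [Real.log_mul ha0 h1a', Real.log_mul hb0' h1b'] at h1
      linarith
    have : (L1a - L1b) / (1 - a) < (Lb - La) / b := by
      have h3 : (L1a - L1b) / (1 - a) < (L1a - L1b) / b :=
        div_lt_div_of_pos_left l2 hb0 hb1a
      have h4 : (L1a - L1b) / b < (Lb - La) / b := by
        apply div_lt_div_of_pos_right l1 hb0  -- name may differ
      linarith
    have := sub_pos.mpr this
    positivity
  -- Term B is positive
  have hB : 0 < (b - a) * ((1 - b) * (Lb - Lba) / b - a * (L1a - Lba) / (1 - a)) := by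
    have g1 : a / b ≤ Lb - Lba := by
      have := Real.log_le_sub_one_of_pos (show (0:ℝ) < (b - a) / b by positivity)
      rw [Real.log_div hba' hb0'] at this
      have hb : (b - a) / b - 1 = -(a / b) := by field_simp; ring
      rw [hb] at this
      linarith
    have g2 : L1a - Lb ≤ (1 - a - b) / b := by
      have := Real.log_le_sub_one_of_pos (show (0:ℝ) < (1 - a) / b by positivity)
      rw [Real.log_div h1a' hb0'] at this
      have hb : (1 - a) / b - 1 = (1 - a - b) / b := by field_simp
      rw [hb] at this
      linarith
    have key2 : (1 - a - b) * (Lb - Lba) > a * b * (L1a - Lb) := by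
      have h5 : 0 < 1 - a - b := by linarith
      have hLbLba : 0 < Lb - Lba := by
        have := Real.log_lt_log hba (by linarith : b - a < b)
        linarith
      calc a * b * (L1a - Lb) ≤ a * b * ((1 - a - b) / b) := by
            apply mul_le_mul_of_nonneg_left g2 (by positivity)
        _ = a * (1 - a - b) := by field_simp <;> ring
        _ < (1 - a - b) * (a / b) := by
            rw [mul_div_assoc']
            rw [lt_div_iff₀ hb0]
            nlinarith [mul_pos (mul_pos h1 h5) h1b]
        _ ≤ (1 - a - b) * (Lb - Lba) := by
            apply mul_le_mul_of_nonneg_left g1 (le_of_lt h5)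
    rw [div_sub_div _ _ hb0' h1a']
    apply mul_pos hba
    apply div_pos _ (by positivity)
    nlinarith [key2]
  linarith
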